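/- Suppose κ is a regular cardinal, ν is an infinite cardinal, and there is an upper-regressive colouring c : [κ]² → θ (with θ an infinite cardinal) such that for every cofinal B ⊆ κ there exists η < ν with otp(c[{η} ⊛ B]) = θ. Then κ ≤ 2^ν. -/

import Mathlib

open Cardinal Ordinal Set

/-- The order type of a set of ordinals. -/
noncomputable def otp (S : Set Ordinal.{0}) : Ordinal.{1} :=
  @Ordinal.type S (Subrel (· < ·) S)
    (RelEmbedding.isWellOrder (Subrel.relEmbedding (· < ·) S))

set_option linter.deprecated false

theorem otp_le_of_subset (S : Set Ordinal.{0}) (δ : Ordinal.{0}) (h : S ⊆ Set.Iio δ) :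
    otp S ≤ Ordinal.lift.{1} δ := by
  have e : typeLT (Set.Iio δ)
      = Ordinal.lift.{1} δ := Ordinal.type_lt_Iio δ
  rw [← e]
  exact @RelEmbedding.ordinal_type_le _ _ _ _
    (@RelEmbedding.isWellOrder _ _ _ _ (Subrel.relEmbedding (· < ·) S) isWellOrder_lt) _ ⟨⟨Set.inclusion h, Set.inclusion_injective h⟩, Iff.rfl⟩

theorem exists_unbounded_fiber {κ : Cardinal} (hκreg : κ.IsRegular) {ρ : Ordinal}
    (hρ : ρ < κ.ord) {ι : Type} (G : Ordinal → ι) (hι : #ι < κ) :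
    ∃ i, ∀ α < κ.ord, ∃ β, α ≤ β ∧ ρ < β ∧ β < κ.ord ∧ G β = i := by
  by_contra h
  push_neg at h
  choose A hA hbad using h
  have hs : iSup A < κ.ord :=
    Cardinal.iSup_lt_ord_of_isRegular hκreg hι hA
  set β := max (iSup A) ρ + 1 with hβ
  have hβκ : β < κ.ord := by
    rw [hβ, Ordinal.add_one_eq_succ]
    exact (Cardinal.isSuccLimit_ord hκreg.aleph0_le).succ_lt (max_lt hs hρ)
  have h1 : max (iSup A) ρ < β := by
    rw [hβ, Ordinal.add_one_eq_succ]; exact Order.lt_succ _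
  exact hbad (G β) β (((Ordinal.le_iSup A _).trans (le_max_left _ _)).trans h1.le)
    ((le_max_right _ _).trans_lt h1) hβκ rfl

noncomputable def xseq (q : Ordinal → Ordinal) : Ordinal → Ordinal :=
  WellFounded.fix Ordinal.lt_wf (fun i IH => Ordinal.bsup.{0, 0} i fun j hj => q (IH j hj))

theorem xseq_def (q : Ordinal → Ordinal) (i : Ordinal) :
    xseq q i = Ordinal.bsup.{0, 0} i (fun j _ => q (xseq q j)) :=
  WellFounded.fix_eq _ _ _
theorem stmt_2 (κ ν θ : Cardinal)
    (hκreg : κ.IsRegular)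
    (hν : ℵ₀ ≤ ν) (hθ : ℵ₀ ≤ θ)
    (c : Ordinal → Ordinal → Ordinal)
    (hcθ : ∀ α β : Ordinal, α < β → β < κ.ord → c α β < θ.ord)
    (hcreg : ∀ α β : Ordinal, α < β → β < κ.ord → c α β < β)
    (hwit : ∀ B : Set Ordinal, B ⊆ Set.Iio κ.ord →
      (∀ α < κ.ord, ∃ β ∈ B, α ≤ β) →
      ∃ η < ν.ord, otp {x : Ordinal | ∃ β ∈ B, η < β ∧ c η β = x} =
        Ordinal.lift.{1} θ.ord) :
    κ ≤ 2 ^ ν := by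
  by_contra hcon
  push_neg at hcon
  have hℵκ : ℵ₀ ≤ κ := hκreg.aleph0_le
  have hνκ : ν < κ := (Cardinal.cantor ν).le.trans_lt hcon
  have hνκo : ν.ord < κ.ord := Cardinal.ord_lt_ord.2 hνκ
  have hκlim := Cardinal.isSuccLimit_ord hℵκ
  have hθlim := Cardinal.isSuccLimit_ord hθ
  have hν0 : (0 : Ordinal) < ν.ord := by
    rw [← Cardinal.ord_zero]
    exact Cardinal.ord_lt_ord.2 (lt_of_lt_of_le Cardinal.aleph0_pos hν)
  -- the closing move
  have key : ∀ B : Set Ordinal, B ⊆ Set.Iio κ.ord → (∀ α < κ.ord, ∃ β ∈ B, α ≤ β) →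
      (∀ η < ν.ord, ∃ e < θ.ord, ∀ β ∈ B, η < β → c η β < e) → False := by
    intro B hB hBcof hbound
    obtain ⟨η, hη, hotp⟩ := hwit B hB hBcof
    obtain ⟨e, he, hbd⟩ := hbound η hη
    have hsub : {x : Ordinal | ∃ β ∈ B, η < β ∧ c η β = x} ⊆ Set.Iio e := by
      rintro x ⟨β, hβ, hηβ, rfl⟩
      exact hbd β hβ hηβ
    have h2 := otp_le_of_subset _ _ hsub
    rw [hotp] at h2
    exact absurd (Ordinal.lift_le.1 h2) (not_le.2 he)
  by_cases hCOF : ∃ e : Ordinal → Ordinal,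
      (∀ j < ν.ord, e j < θ.ord) ∧ ∀ x < θ.ord, ∃ j < ν.ord, x ≤ e j
  · -- cofinality of θ.ord is at most ν : coding argument
    obtain ⟨e, he1, he2⟩ := hCOF
    set T := ν.ord.ToType with hT
    let iso : Set.Iio ν.ord ≃o T := Ordinal.ToType.mk
    set jm : Ordinal → Ordinal → Ordinal :=
      fun η β => sInf {j | j < ν.ord ∧ c η β < e j} with hjm
    have hjmem : ∀ η β, η < ν.ord → ν.ord < β → β < κ.ord →
        jm η β < ν.ord ∧ c η β < e (jm η β) := by
      intro η β hη hβ1 hβ2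
      have hne : {j | j < ν.ord ∧ c η β < e j}.Nonempty := by
        have h1 : c η β + 1 < θ.ord := by
          rw [Ordinal.add_one_eq_succ]
          exact hθlim.succ_lt (hcθ η β (hη.trans hβ1) hβ2)
        obtain ⟨j, hj, hjle⟩ := he2 _ h1
        exact ⟨j, hj, lt_of_lt_of_le (by rw [Ordinal.add_one_eq_succ]; exact Order.lt_succ _) hjle⟩
      exact csInf_mem hne
    set G : Ordinal → (T → T) := fun β =>
      if h : ν.ord < β ∧ β < κ.ord then
        (fun t => iso ⟨jm (iso.symm t).1 β, (hjmem _ β (iso.symm t).2 h.1 h.2).1⟩)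
      else id with hG
    have hι : #(T → T) < κ := by
      have := Cardinal.mk_arrow T T
      simp only [Cardinal.lift_id] at this
      rw [this, hT, Cardinal.mk_toType, Cardinal.card_ord, Cardinal.power_self_eq hν]
      exact hcon
    obtain ⟨g, hg⟩ := exists_unbounded_fiber hκreg hνκo G hι
    refine key {β | ν.ord < β ∧ β < κ.ord ∧ G β = g} (fun β hβ => hβ.2.1)
      (fun α hα => ?_) ?_
    · obtain ⟨β, h1, h2, h3, h4⟩ := hg α hα
      exact ⟨β, ⟨h2, h3, h4⟩, h1⟩
    · intro η hη
      set t := iso ⟨η, hη⟩ with ht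
      refine ⟨e (iso.symm (g t)).1, he1 _ (iso.symm (g t)).2, ?_⟩
      rintro β ⟨hβ1, hβ2, hβ3⟩ hηβ
      have hGt : G β t = g t := by rw [hβ3]
      rw [hG] at hGt
      simp only [dif_pos (And.intro hβ1 hβ2)] at hGt
      have h5 := congrArg iso.symm hGt
      rw [OrderIso.symm_apply_apply] at h5
      have h6 : jm ((iso.symm t)).1 β = (iso.symm (g t)).1 := congrArg Subtype.val h5
      have h7 : (iso.symm t).1 = η := by rw [ht, OrderIso.symm_apply_apply]
      rw [h7] at h6
      rw [← h6]
      exact (hjmem η β hη hβ1 hβ2).2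
  · -- no short cofinal family in θ.ord
    have hbd : ∀ β, ν.ord < β → β < κ.ord → ∃ x < θ.ord, ∀ η < ν.ord, c η β < x := by
      intro β h1 h2
      by_contra hno
      push_neg at hno
      refine hCOF ⟨fun j => c j β, fun j hj => hcθ j β (hj.trans h1) h2, fun x hx => ?_⟩
      obtain ⟨η, hη, hle⟩ := hno x hx
      exact ⟨η, hη, hle⟩
    by_cases hLbig : ∃ γ < θ.ord, ∀ α < κ.ord, ∃ β, α ≤ β ∧ ν.ord < β ∧ β < κ.ord ∧
        ∀ η < ν.ord, c η β < γ
    · obtain ⟨γ, hγ, hL⟩ := hLbig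
      refine key {β | ν.ord < β ∧ β < κ.ord ∧ ∀ η < ν.ord, c η β < γ}
        (fun β hβ => hβ.2.1) (fun α hα => ?_) ?_
      · obtain ⟨β, h1, h2, h3, h4⟩ := hL α hα
        exact ⟨β, ⟨h2, h3, h4⟩, h1⟩
      · intro η hη
        exact ⟨γ, hγ, fun β hβ hηβ => hβ.2.2 η hη⟩
    · push_neg at hLbig
      -- every level set is bounded; build a closure point and contradict
      classical
      set b : Ordinal → Ordinal := fun γ =>
        if h : γ < θ.ord then (hLbig γ h).choose else 0 with hb
      have hbκ : ∀ γ, b γ < κ.ord := by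
        intro γ
        by_cases hγ : γ < θ.ord
        · rw [hb]
          simp only [dif_pos hγ]
          exact (hLbig γ hγ).choose_spec.1
        · rw [hb]
          simp only [dif_neg hγ]
          rw [← Cardinal.ord_zero]
          exact Cardinal.ord_lt_ord.2 (lt_of_lt_of_le Cardinal.aleph0_pos hℵκ)
      have hbspec : ∀ γ, γ < θ.ord → ∀ β, b γ ≤ β → ν.ord < β → β < κ.ord →
          ∃ η < ν.ord, γ ≤ c η β := by
        intro γ hγ β hbβ h1 h2
        rw [hb] at hbβ
        simp only [dif_pos hγ] at hbβ
        exact (hLbig γ hγ).choose_spec.2 β hbβ h1 h2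
      -- build a closure point of cofinality ν⁺ and derive a contradiction
      set μ := Order.succ ν with hμ
      have hμreg : μ.IsRegular := Cardinal.isRegular_succ hν
      have hℵμ : ℵ₀ ≤ μ := hν.trans (Order.le_succ ν)
      have hμκ : μ < κ := lt_of_le_of_lt (Order.succ_le_of_lt (Cardinal.cantor ν)) hcon
      have hμlim := Cardinal.isSuccLimit_ord hℵμ
      have hνμo : ν.ord < μ.ord := Cardinal.ord_lt_ord.2 (Order.lt_succ ν)
      set q : Ordinal → Ordinal :=
        fun y => (Ordinal.bsup.{0, 0} (y + 1) fun γ _ => b γ) + (ν.ord + (y + 1)) with hq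
      have hq1 : ∀ y, y < q y := by
        intro y
        calc y < y + 1 := by rw [Ordinal.add_one_eq_succ]; exact Order.lt_succ y
          _ ≤ ν.ord + (y + 1) := le_add_self
          _ ≤ q y := le_add_self
      have hqν : ∀ y, ν.ord < q y := by
        intro y
        have h1 : ν.ord < ν.ord + (y + 1) := by
          have := (add_lt_add_iff_left ν.ord).2
            (show (0 : Ordinal) < y + 1 by
              rw [Ordinal.add_one_eq_succ]; exact Ordinal.succ_pos y)
          rwa [add_zero] at this
        exact h1.trans_le (le_add_self)
      have hqb : ∀ y γ, γ ≤ y → b γ < q y := by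
        intro y γ hγ
        have h1 : b γ ≤ Ordinal.bsup.{0, 0} (y + 1) (fun γ _ => b γ) :=
          Ordinal.le_bsup _ γ
            (by rw [Ordinal.add_one_eq_succ]; exact Order.lt_succ_iff.2 hγ)
        have h2 : Ordinal.bsup.{0, 0} (y + 1) (fun γ _ => b γ) < q y := by
          have h0 : (0 : Ordinal) < ν.ord + (y + 1) :=
            hν0.trans_le (le_self_add)
          have := (add_lt_add_iff_left (Ordinal.bsup.{0, 0} (y + 1) fun γ _ => b γ)).2 h0
          rwa [add_zero] at this
        exact h1.trans_lt h2
      have hqκ : ∀ y, y < κ.ord → q y < κ.ord := by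
        intro y hy
        have hy1 : (y + 1).card < κ := by
          rw [← Cardinal.lt_ord, Ordinal.add_one_eq_succ]
          exact hκlim.succ_lt hy
        have h1 : Ordinal.bsup.{0, 0} (y + 1) (fun γ _ => b γ) < κ.ord :=
          Cardinal.bsup_lt_ord_of_isRegular hκreg hy1 (fun i _ => hbκ i)
        rw [Cardinal.lt_ord, Ordinal.card_add, Ordinal.card_add]
        refine Cardinal.add_lt_of_lt hℵκ (Cardinal.lt_ord.1 h1)
          (Cardinal.add_lt_of_lt hℵκ ?_ hy1)
        rw [Cardinal.card_ord]; exact hνκ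
      set x := xseq q with hx
      have hstep : ∀ j i, j < i → q (x j) ≤ x i := by
        intro j i hji
        rw [hx, xseq_def q i]
        exact Ordinal.le_bsup _ j hji
      have hxκ : ∀ i, i ≤ μ.ord → x i < κ.ord := by
        intro i
        induction i using Ordinal.induction with
        | _ i IH =>
          intro hi
          rw [hx, xseq_def]
          refine Cardinal.bsup_lt_ord_of_isRegular hκreg ?_
            (fun j hj => hqκ _ (IH j hj (le_of_lt (hj.trans_le hi))))
          calc i.card ≤ μ.ord.card := Ordinal.card_le_card hi
            _ = μ := Cardinal.card_ord μ
            _ < κ := hμκ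
      set β' := x μ.ord with hβ'
      have hβκ : β' < κ.ord := hxκ _ le_rfl
      have hμ0 : (0 : Ordinal) < μ.ord := hν0.trans hνμo
      have hνβ : ν.ord < β' := lt_of_lt_of_le (hqν (x 0)) (hstep 0 μ.ord hμ0)
      have hxlt : ∀ j, j < μ.ord → x j < β' :=
        fun j hj => (hq1 (x j)).trans_le (hstep j μ.ord hj)
      have hclosure : ∀ γ, γ < β' → b γ < β' := by
        intro γ hγ
        rw [hβ', hx, xseq_def] at hγ
        obtain ⟨j, hj, hγj⟩ := (Ordinal.lt_bsup _).1 hγ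
        have h1 : γ < x (j + 1) := hγj.trans_le
          (hstep j (j + 1) (by rw [Ordinal.add_one_eq_succ]; exact Order.lt_succ j))
        have h2 : b γ < q (x (j + 1)) := hqb _ _ h1.le
        exact h2.trans_le (hstep (j + 1) μ.ord
          (by rw [Ordinal.add_one_eq_succ]; exact hμlim.succ_lt hj))
      set γ' := Ordinal.bsup.{0, 0} ν.ord (fun η _ => c η β' + 1) with hγ'
      have hcγ : ∀ η, η < ν.ord → c η β' < γ' := by
        intro η hη
        have h1 := Ordinal.le_bsup (fun η (_ : η < ν.ord) => c η β' + 1) η hη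
        rw [← hγ'] at h1
        exact lt_of_lt_of_le
          (by rw [Ordinal.add_one_eq_succ]; exact Order.lt_succ _) h1
      have hγθ : γ' < θ.ord := by
        obtain ⟨xb, hxθ, hxb⟩ := hbd β' hνβ hβκ
        refine lt_of_le_of_lt ?_ hxθ
        rw [hγ']
        refine Ordinal.bsup_le (fun η hη => ?_)
        rw [Ordinal.add_one_eq_succ, Order.succ_le_iff]
        exact hxb η hη
      have hγβ : γ' < β' := by
        by_contra hge
        push_neg at hge
        have H : ∀ j, ∃ η, η < ν.ord ∧ (j < μ.ord → x j < c η β' + 1) := by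
          intro j
          by_cases hj : j < μ.ord
          · have h1 : x j < γ' := lt_of_lt_of_le (hxlt j hj) hge
            rw [hγ'] at h1
            obtain ⟨η, hη, hlt⟩ := (Ordinal.lt_bsup _).1 h1
            exact ⟨η, hη, fun _ => hlt⟩
          · exact ⟨0, hν0, fun h => absurd h hj⟩
        choose f hf1 hf2 using H
        set isoν : Set.Iio ν.ord ≃o ν.ord.ToType := Ordinal.ToType.mk with hisoν
        set F : Ordinal → ν.ord.ToType := fun j => isoν ⟨f j, hf1 j⟩ with hF
        have hιν : #(ν.ord.ToType) < μ := by
          rw [Cardinal.mk_toType, Cardinal.card_ord, hμ]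
          exact Order.lt_succ ν
        obtain ⟨t₀, ht₀⟩ := exists_unbounded_fiber hμreg hμ0 F hιν
        set η₀ := (isoν.symm t₀).1 with hη₀
        have hη₀ν : η₀ < ν.ord := (isoν.symm t₀).2
        have hββ : β' ≤ c η₀ β' := by
          conv_lhs => rw [hβ', hx, xseq_def]
          refine Ordinal.bsup_le (fun j hj => ?_)
          obtain ⟨j', h1, h2, h3, h4⟩ := ht₀ (j + 1)
            (by rw [Ordinal.add_one_eq_succ]; exact hμlim.succ_lt hj)
          simp only [hF] at h4
          have h5 := congrArg isoν.symm h4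
          rw [OrderIso.symm_apply_apply] at h5
          have hfj' : f j' = η₀ := by
            rw [hη₀, ← h5]
          have h6 : x j' < c η₀ β' + 1 := by
            rw [← hfj']; exact hf2 j' h3
          have h7 : q (xseq q j) ≤ x j' := hstep j j'
            (lt_of_lt_of_le
              (by rw [Ordinal.add_one_eq_succ]; exact Order.lt_succ j) h1)
          have h8 : x j' ≤ c η₀ β' := by
            rwa [Ordinal.add_one_eq_succ, Order.lt_succ_iff] at h6
          exact h7.trans h8
        exact absurd hββ (not_le.2 (hcreg η₀ β' (hη₀ν.trans hνβ) hβκ))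
      obtain ⟨η, hη, hle⟩ := hbspec γ' hγθ β' (hclosure γ' hγβ).le hνβ hβκ
      exact absurd hle (not_le.2 (hcγ η hη))
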